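/- Let W_1 = 0 and W_{n+1} = γ_n W_n + σ² with γ_n = n/(n + q_n), q_n = 1/p_n − 1, p_n ∈ (0,1). If p_n → 0 as n → ∞, then W_n/n → 0; i.e., the expected variance E Var(x(t_n)) = W_n/n converges to 0. -/

import Mathlib

open Filter

noncomputable def Mmax (r : ℕ → ℝ) : ℕ → ℝ
  | 0 => 0
  | n + 1 => max (Mmax r n) (n * r n)

lemma Mmax_nonneg (r : ℕ → ℝ) : ∀ n, 0 ≤ Mmax r n := by
  intro n
  induction n with
  | zero => simp [Mmax]
  | succ n ih => exact le_trans ih (le_max_left _ _)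

lemma Mmax_div_tendsto (r : ℕ → ℝ) (hr0 : ∀ n, 0 ≤ r n)
    (hr : Tendsto r atTop (nhds 0)) :
    Tendsto (fun n : ℕ => Mmax r n / n) atTop (nhds 0) := by
  rw [Metric.tendsto_atTop] at hr ⊢
  intro ε hε
  obtain ⟨N, hN⟩ := hr (ε / 2) (by linarith)
  have hrlt : ∀ k ≥ N, r k < ε / 2 := by
    intro k hk
    have := hN k hk
    rw [Real.dist_eq, sub_zero, abs_of_nonneg (hr0 k)] at this
    exact this
  have key : ∀ n, N ≤ n → Mmax r n ≤ Mmax r N + (ε / 2) * n := by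
    intro n hn
    induction n, hn using Nat.le_induction with
    | base =>
      have : (0:ℝ) ≤ (ε / 2) * N := by positivity
      linarith
    | succ n hn ih =>
      have h1 : Mmax r (n + 1) = max (Mmax r n) (n * r n) := rfl
      rw [h1]
      apply max_le
      · push_cast
        linarith
      · have h2 : (n : ℝ) * r n ≤ (n : ℝ) * (ε / 2) :=
          mul_le_mul_of_nonneg_left (hrlt n hn).le (Nat.cast_nonneg n)
        have h3 : (0:ℝ) ≤ Mmax r N := Mmax_nonneg r N
        push_cast
        nlinarith
  refine ⟨max (N + 1) (⌈2 * Mmax r N / ε⌉₊ + 1), ?_⟩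
  intro n hn
  have hnN : N ≤ n := le_trans (Nat.le_succ N) (le_trans (le_max_left _ _) hn)
  have hn1 : 1 ≤ n := le_trans (Nat.le_add_left 1 N) (le_trans (le_max_left _ _) hn)
  have hnpos : (0:ℝ) < n := by exact_mod_cast hn1
  have hceil : (⌈2 * Mmax r N / ε⌉₊ : ℝ) + 1 ≤ n := by
    have : ⌈2 * Mmax r N / ε⌉₊ + 1 ≤ n := le_trans (le_max_right _ _) hn
    exact_mod_cast this
  have hbig : 2 * Mmax r N / ε < n := lt_of_le_of_lt (Nat.le_ceil _) (by linarith)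
  have hMn : Mmax r N < ε / 2 * n := by
    have := (div_lt_iff₀ (by linarith : (0:ℝ) < ε)).mp hbig
    nlinarith
  have hkey := key n hnN
  have h0 : 0 ≤ Mmax r n := Mmax_nonneg r n
  rw [Real.dist_eq, sub_zero, abs_of_nonneg (div_nonneg h0 hnpos.le)]
  rw [div_lt_iff₀ hnpos]
  nlinarith

/-- If `W_1 = 0`, `W_{n+1} = γ_n W_n + σ²` with `γ_n = n/(n + q_n)`, `q_n = 1/p_n − 1`,
`p_n ∈ (0,1)`, and `p_n → 0`, then the expected variance `W_n / n` converges to `0`. -/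
theorem growing_vanishing_rate (σ2 : ℝ) (hσ : 0 < σ2)
    (p : ℕ → ℝ) (hp : ∀ n, 0 < p n ∧ p n < 1)
    (hp0 : Tendsto p atTop (nhds 0))
    (W : ℕ → ℝ) (hW1 : W 1 = 0)
    (hW : ∀ n ≥ 1, W (n + 1) = ((n : ℝ) / ((n : ℝ) + (1 / p n - 1))) * W n + σ2) :
    Tendsto (fun n : ℕ => W n / n) atTop (nhds 0) := by
  set r : ℕ → ℝ := fun n => p n / (1 - p n) with hrdef
  have hr0 : ∀ n, 0 ≤ r n := fun n =>
    le_of_lt (div_pos (hp n).1 (by linarith [(hp n).2]))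
  have hr : Tendsto r atTop (nhds 0) := by
    have h := hp0.div (tendsto_const_nhds.sub hp0) (by norm_num : (1:ℝ) - 0 ≠ 0)
    simp only [sub_zero, div_one] at h
    exact h
  -- basic facts about q_n
  have hq : ∀ n : ℕ, 0 < 1 / p n - 1 := by
    intro n
    have h1 : 1 < 1 / p n := one_lt_one_div (hp n).1 (hp n).2
    linarith
  have hγ : ∀ n : ℕ, 1 ≤ n → 0 ≤ (n : ℝ) / ((n : ℝ) + (1 / p n - 1)) := by
    intro n hn
    have hnpos : (0:ℝ) < n := by exact_mod_cast hn
    exact le_of_lt (div_pos hnpos (by linarith [hq n]))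
  -- nonnegativity of W
  have hWnn : ∀ n, 1 ≤ n → 0 ≤ W n := by
    intro n hn
    induction n, hn using Nat.le_induction with
    | base => rw [hW1]
    | succ n hn ih =>
      rw [hW n hn]
      have := hγ n hn
      nlinarith
  -- key upper bound
  have hbound : ∀ n, 1 ≤ n → W n ≤ σ2 * (1 + Mmax r n) := by
    intro n hn
    induction n, hn using Nat.le_induction with
    | base =>
      rw [hW1]
      nlinarith [Mmax_nonneg r 1]
    | succ n hn ih =>
      rw [hW n hn]
      set q := 1 / p n - 1 with hqdef
      have hqpos : 0 < q := hq n
      have hnpos : (0:ℝ) < n := by exact_mod_cast hn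
      have hdpos : (0:ℝ) < (n : ℝ) + q := by linarith
      set X := Mmax r (n + 1) with hXdef
      have hX1 : Mmax r n ≤ X := le_max_left _ _
      have hX2 : (n : ℝ) * r n ≤ X := le_max_right _ _
      -- q * (n * r n) = n
      have hp1 : p n ≠ 0 := ne_of_gt (hp n).1
      have hp2 : (1:ℝ) - p n ≠ 0 := ne_of_gt (by linarith [(hp n).2])
      have hqr : q * ((n : ℝ) * r n) = n := by
        rw [hqdef, hrdef]
        field_simp
      have hqX : (n : ℝ) ≤ q * X := by
        rw [← hqr]
        exact mul_le_mul_of_nonneg_left hX2 hqpos.le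
      -- γ * (1 + X) ≤ X
      have hγX : (n : ℝ) / ((n : ℝ) + q) * (1 + X) ≤ X := by
        rw [div_mul_eq_mul_div, div_le_iff₀ hdpos]
        nlinarith
      have hγnn : 0 ≤ (n : ℝ) / ((n : ℝ) + q) := hγ n hn
      have h1 : ((n : ℝ) / ((n : ℝ) + q)) * W n ≤
          ((n : ℝ) / ((n : ℝ) + q)) * (σ2 * (1 + X)) := by
        apply mul_le_mul_of_nonneg_left _ hγnn
        have : σ2 * (1 + Mmax r n) ≤ σ2 * (1 + X) := by nlinarith
        linarith [ih]
      calc ((n : ℝ) / ((n : ℝ) + q)) * W n + σ2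
          ≤ ((n : ℝ) / ((n : ℝ) + q)) * (σ2 * (1 + X)) + σ2 := by linarith
        _ = σ2 * ((n : ℝ) / ((n : ℝ) + q) * (1 + X)) + σ2 := by ring
        _ ≤ σ2 * X + σ2 := by nlinarith
        _ = σ2 * (1 + X) := by ring
  -- the upper bound tends to 0
  have hub : Tendsto (fun n : ℕ => σ2 / n + σ2 * (Mmax r n / n)) atTop (nhds 0) := by
    have h1 : Tendsto (fun n : ℕ => σ2 / n) atTop (nhds 0) :=
      tendsto_const_div_atTop_nhds_zero_nat σ2
    have h2 : Tendsto (fun n : ℕ => σ2 * (Mmax r n / n)) atTop (nhds (σ2 * 0)) :=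
      (Mmax_div_tendsto r hr0 hr).const_mul σ2
    simpa using h1.add h2
  apply squeeze_zero' (g := fun n : ℕ => σ2 / n + σ2 * (Mmax r n / n))
  · filter_upwards [eventually_ge_atTop 1] with n hn
    have hnpos : (0:ℝ) < n := by exact_mod_cast hn
    exact div_nonneg (hWnn n hn) hnpos.le
  · filter_upwards [eventually_ge_atTop 1] with n hn
    have hnpos : (0:ℝ) < n := by exact_mod_cast hn
    have h1 : W n / n ≤ σ2 * (1 + Mmax r n) / n := by
      gcongr
      exact hbound n hn
    have heq : σ2 * (1 + Mmax r n) / n = σ2 / n + σ2 * (Mmax r n / n) := by ring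
    linarith
  · exact hub
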